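/- arXiv:2411.03163 — 2 statements merged into one kernel-verified Lean document; each statement's English description precedes it below -/
import Mathlib

section
/- Let H = S⁻ᵀDS⁻¹ be a Hamiltonian matrix with symplectic diagonalization (S symplectic, D = diag(d₁,d₁,…,d_m,d_m), all d_i > 0, d_max the largest d_i) and let V := (1/2)·S·diag(coth d₁, coth d₁,…, coth d_m, coth d_m)·Sᵀ be its covariance matrix. Then for every real t ≥ 0 the complex matrix 2iΩV + ((t−1)/(t+1))·I is invertible and its smallest singular value is at least (2/‖S‖∞²)·e^{−2 d_max}/(1 − e^{−2 d_max}); equivalently, ‖(2iΩV + ((t−1)/(t+1))·I)⁻¹‖∞ ≤ (‖S‖∞²/2)·(e^{2 d_max} − 1). -/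
open Matrix
open scoped Matrix.Norms.L2Operator

/-- The spectral norm (ℓ²→ℓ² operator norm, largest singular value) of a matrix. -/
noncomputable def spNorm {𝕜 : Type*} [RCLike 𝕜] {p q : Type*} [Fintype p] [Fintype q]
    [DecidableEq q] (A : Matrix p q 𝕜) : ℝ :=
  ‖LinearMap.toContinuousLinearMap (Matrix.toEuclideanLin A)‖

/-- Index set for `2m × 2m` matrices: the pair `(i, δ)` stands for the index `2i - δ`,
`(i, 0)` being the first index of the `i`-th pair and `(i, 1)` the second. -/
abbrev Idx (m : ℕ) := Fin m × Fin 2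

/-- The standard symplectic form: block diagonal with `m` blocks `[[0,1],[-1,0]]`. -/
def Omega (m : ℕ) : Matrix (Idx m) (Idx m) ℝ :=
  Matrix.of fun p q =>
    if p.1 = q.1 ∧ p.2 = 0 ∧ q.2 = 1 then 1
    else if p.1 = q.1 ∧ p.2 = 1 ∧ q.2 = 0 then -1 else 0

/-- The diagonal matrix `diag (d₁, d₁, …, d_m, d_m)`. -/
def pairDiag {m : ℕ} (d : Fin m → ℝ) : Matrix (Idx m) (Idx m) ℝ :=
  Matrix.diagonal fun p => d p.1

/-- Hyperbolic cotangent. -/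
noncomputable def rcoth (x : ℝ) : ℝ := Real.cosh x / Real.sinh x

/-- A real matrix regarded as a complex matrix. -/
def cplx {p q : Type*} (A : Matrix p q ℝ) : Matrix p q ℂ :=
  A.map (fun x => (x : ℂ))

/-! ### Auxiliary lemmas -/

section Aux

lemma spNorm_eq {𝕜 : Type*} [RCLike 𝕜] {p q : Type*} [Fintype p] [Fintype q]
    [DecidableEq q] (A : Matrix p q 𝕜) : spNorm A = ‖A‖ := rfl

lemma Omega_mul_Omega (m : ℕ) : Omega m * Omega m = -1 := by
  ext ⟨i, δ⟩ ⟨j, ε⟩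
  simp only [Matrix.mul_apply, Omega, of_apply, Fintype.sum_prod_type, Fin.sum_univ_two]
  fin_cases δ <;> fin_cases ε <;> by_cases h : i = j <;>
    simp [h, Finset.sum_ite_eq', Matrix.one_apply, Prod.ext_iff, eq_comm]

lemma Omega_mul_pairDiag (m : ℕ) (f : Fin m → ℝ) :
    Omega m * pairDiag f = pairDiag f * Omega m := by
  ext ⟨i, δ⟩ ⟨j, ε⟩
  simp only [pairDiag, mul_diagonal, diagonal_mul, Omega, of_apply]
  by_cases h : i = j <;> fin_cases δ <;> fin_cases ε <;> simp [h]

lemma symp_right_inv {m : ℕ} (S : Matrix (Idx m) (Idx m) ℝ) (hS : S * Omega m * Sᵀ = Omega m) :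
    S * (Omega m * Sᵀ * -(Omega m)) = 1 := by
  have h1 : S * (Omega m * Sᵀ * -(Omega m)) = (S * Omega m * Sᵀ) * -(Omega m) := by
    noncomm_ring
  rw [h1, hS, Matrix.mul_neg, Omega_mul_Omega, neg_neg]

lemma symp_transpose {m : ℕ} (S : Matrix (Idx m) (Idx m) ℝ) (hS : S * Omega m * Sᵀ = Omega m) :
    Sᵀ * Omega m * S = Omega m := by
  have h1 : (Omega m * Sᵀ * -(Omega m)) * S = 1 := by
    rw [← mul_eq_one_comm]; exact symp_right_inv S hS
  calc Sᵀ * Omega m * S = (-(Omega m * Omega m)) * (Sᵀ * Omega m * S) := by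
        rw [Omega_mul_Omega, neg_neg, Matrix.one_mul]
    _ = (-(Omega m)) * ((Omega m * Sᵀ * -(Omega m)) * S) * (-1) := by noncomm_ring
    _ = (-(Omega m)) * 1 * (-1) := by rw [h1]
    _ = Omega m := by noncomm_ring

lemma sympT_right_inv {m : ℕ} (S : Matrix (Idx m) (Idx m) ℝ) (hS : S * Omega m * Sᵀ = Omega m) :
    Sᵀ * (-(Omega m * S * Omega m)) = 1 := by
  have h2 := symp_transpose S hS
  calc Sᵀ * (-(Omega m * S * Omega m)) = (Sᵀ * Omega m * S) * Omega m * (-1) := by noncomm_ring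
    _ = Omega m * Omega m * (-1) := by rw [h2]
    _ = 1 := by rw [Omega_mul_Omega]; noncomm_ring

lemma cplx_eq_map {p q : Type*} (A : Matrix p q ℝ) : cplx A = A.map Complex.ofRealHom := rfl

lemma cplx_mul {n p q : Type*} [Fintype p] (A : Matrix n p ℝ) (B : Matrix p q ℝ) :
    cplx (A * B) = cplx A * cplx B := by
  simp [cplx_eq_map, Matrix.map_mul]

lemma cplx_one {n : Type*} [Fintype n] [DecidableEq n] : cplx (1 : Matrix n n ℝ) = 1 := by
  simp [cplx_eq_map]

lemma cplx_neg {p q : Type*} (A : Matrix p q ℝ) : cplx (-A) = -cplx A := by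
  ext i j; simp [cplx]

lemma cplx_smul {p q : Type*} (r : ℝ) (A : Matrix p q ℝ) : cplx (r • A) = (r : ℂ) • cplx A := by
  ext i j; simp [cplx]

lemma cplx_transpose {p q : Type*} (A : Matrix p q ℝ) : cplx (Aᵀ) = (cplx A)ᵀ := by
  ext i j; simp [cplx]

lemma cplx_diagonal {n : Type*} [Fintype n] [DecidableEq n] (f : n → ℝ) :
    cplx (Matrix.diagonal f) = Matrix.diagonal (fun i => (f i : ℂ)) := by
  rw [cplx_eq_map, Matrix.diagonal_map (by simp)]; rfl

/-! ### The `K` matrix -/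

noncomputable def Kmat {m : ℕ} (c : Fin m → ℝ) (l : ℝ) : Matrix (Idx m) (Idx m) ℂ :=
  Complex.I • (cplx (Omega m) * cplx (pairDiag c)) + (l : ℂ) • 1

noncomputable def Kmat' {m : ℕ} (c : Fin m → ℝ) (l : ℝ) : Matrix (Idx m) (Idx m) ℂ :=
  (l : ℂ) • 1 - Complex.I • (cplx (Omega m) * cplx (pairDiag c))

noncomputable def Dinv {m : ℕ} (c : Fin m → ℝ) (l : ℝ) : Matrix (Idx m) (Idx m) ℂ :=
  Matrix.diagonal fun p => ((l ^ 2 - c p.1 ^ 2 : ℝ)⁻¹ : ℂ)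

lemma Kmat_mul_Kmat' {m : ℕ} (c : Fin m → ℝ) (l : ℝ) :
    Kmat c l * Kmat' c l = Matrix.diagonal fun p => ((l ^ 2 - c p.1 ^ 2 : ℝ) : ℂ) := by
  have hOO : cplx (Omega m) * cplx (Omega m) = -1 := by
    rw [← cplx_mul, Omega_mul_Omega, ← cplx_one, ← cplx_neg]
  have hcomm : cplx (Omega m) * cplx (pairDiag c) = cplx (pairDiag c) * cplx (Omega m) := by
    rw [← cplx_mul, ← cplx_mul, Omega_mul_pairDiag]
  have hXX : (cplx (Omega m) * cplx (pairDiag c)) * (cplx (Omega m) * cplx (pairDiag c))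
      = -(cplx (pairDiag c) * cplx (pairDiag c)) := by
    calc (cplx (Omega m) * cplx (pairDiag c)) * (cplx (Omega m) * cplx (pairDiag c))
        = cplx (Omega m) * (cplx (pairDiag c) * cplx (Omega m)) * cplx (pairDiag c) := by
          noncomm_ring
      _ = cplx (Omega m) * (cplx (Omega m) * cplx (pairDiag c)) * cplx (pairDiag c) := by
          rw [← hcomm]
      _ = (cplx (Omega m) * cplx (Omega m)) * (cplx (pairDiag c) * cplx (pairDiag c)) := by
          noncomm_ring
      _ = -(cplx (pairDiag c) * cplx (pairDiag c)) := by rw [hOO]; noncomm_ring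
  have expand : Kmat c l * Kmat' c l = ((l : ℂ) * l) • 1 - (Complex.I * Complex.I) •
      ((cplx (Omega m) * cplx (pairDiag c)) * (cplx (Omega m) * cplx (pairDiag c))) := by
    rw [Kmat, Kmat']
    simp only [mul_sub, add_mul, mul_add, smul_add, smul_sub, smul_mul_assoc, mul_smul_comm,
      smul_smul, Matrix.mul_one, Matrix.one_mul]
    rw [mul_comm (l : ℂ) Complex.I]
    abel
  rw [expand, Complex.I_mul_I, hXX]
  rw [pairDiag, cplx_diagonal, Matrix.diagonal_mul_diagonal]
  ext p q
  by_cases h : p = q <;>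
    simp [Matrix.diagonal_apply, Matrix.one_apply, h, Matrix.sub_apply]
  ring

lemma Kmat_mul_inv {m : ℕ} (c : Fin m → ℝ) (l : ℝ) (hcl : ∀ i, l ^ 2 - c i ^ 2 ≠ 0) :
    Kmat c l * (Kmat' c l * Dinv c l) = 1 := by
  rw [← Matrix.mul_assoc, Kmat_mul_Kmat', Dinv, Matrix.diagonal_mul_diagonal]
  have h : ∀ p : Idx m, ((l ^ 2 - c p.1 ^ 2 : ℝ) : ℂ) * ((l ^ 2 - c p.1 ^ 2 : ℝ)⁻¹ : ℂ) = 1 := by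
    intro p
    rw [← Complex.ofReal_inv, ← Complex.ofReal_mul, mul_inv_cancel₀ (hcl p.1), Complex.ofReal_one]
  rw [show (fun p : Idx m => ((l ^ 2 - c p.1 ^ 2 : ℝ) : ℂ) * ((l ^ 2 - c p.1 ^ 2 : ℝ)⁻¹ : ℂ))
      = fun _ => (1 : ℂ) from funext h, Matrix.diagonal_one]

/-! ### Coordinates -/

lemma sum_Idx {m : ℕ} {M : Type*} [AddCommMonoid M] (f : Idx m → M) :
    ∑ p, f p = ∑ j, (f (j, 0) + f (j, 1)) := by
  rw [Fintype.sum_prod_type]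
  exact Finset.sum_congr rfl fun j _ => Fin.sum_univ_two _

lemma Kmat_apply {m : ℕ} (c : Fin m → ℝ) (l : ℝ) (p q : Idx m) :
    Kmat c l p q = Complex.I * (((Omega m p q : ℝ) : ℂ) * (c q.1 : ℂ)) +
      (l : ℂ) * (1 : Matrix (Idx m) (Idx m) ℂ) p q := by
  rw [Kmat, pairDiag, cplx_diagonal]
  simp [Matrix.mul_diagonal, cplx]

lemma Kmat_mulVec_zero {m : ℕ} (c : Fin m → ℝ) (l : ℝ) (x : Idx m → ℂ) (i : Fin m) :
    (Kmat c l *ᵥ x) (i, 0) = Complex.I * (c i * x (i, 1)) + l * x (i, 0) := by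
  rw [mulVec, dotProduct, sum_Idx]
  have : ∀ j : Fin m, Kmat c l (i, 0) (j, 0) * x (j, 0) + Kmat c l (i, 0) (j, 1) * x (j, 1)
      = if j = i then Complex.I * (c i * x (i, 1)) + l * x (i, 0) else 0 := by
    intro j
    rw [Kmat_apply, Kmat_apply]
    by_cases h : j = i
    · simp [Omega, Matrix.one_apply, h, Prod.ext_iff]; ring
    · simp [Omega, Matrix.one_apply, h, Ne.symm h, Prod.ext_iff]
  rw [Finset.sum_congr rfl fun j _ => this j, Finset.sum_ite_eq' Finset.univ i
    (fun _ => Complex.I * (c i * x (i, 1)) + l * x (i, 0))]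
  simp

lemma Kmat_mulVec_one {m : ℕ} (c : Fin m → ℝ) (l : ℝ) (x : Idx m → ℂ) (i : Fin m) :
    (Kmat c l *ᵥ x) (i, 1) = -(Complex.I * (c i * x (i, 0))) + l * x (i, 1) := by
  rw [mulVec, dotProduct, sum_Idx]
  have : ∀ j : Fin m, Kmat c l (i, 1) (j, 0) * x (j, 0) + Kmat c l (i, 1) (j, 1) * x (j, 1)
      = if j = i then -(Complex.I * (c i * x (i, 0))) + l * x (i, 1) else 0 := by
    intro j
    rw [Kmat_apply, Kmat_apply]
    by_cases h : j = i
    · simp [Omega, Matrix.one_apply, h, Prod.ext_iff]; ring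
    · simp [Omega, Matrix.one_apply, h, Ne.symm h, Prod.ext_iff]
  rw [Finset.sum_congr rfl fun j _ => this j, Finset.sum_ite_eq' Finset.univ i
    (fun _ => -(Complex.I * (c i * x (i, 0))) + l * x (i, 1))]
  simp

lemma Omega_mulVec_zero {m : ℕ} (x : Idx m → ℝ) (i : Fin m) :
    (Omega m *ᵥ x) (i, 0) = x (i, 1) := by
  rw [mulVec, dotProduct, sum_Idx]
  have : ∀ j : Fin m, Omega m (i, 0) (j, 0) * x (j, 0) + Omega m (i, 0) (j, 1) * x (j, 1)
      = if j = i then x (i, 1) else 0 := by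
    intro j
    by_cases h : j = i
    · simp [Omega, h]
    · simp [Omega, h, Ne.symm h]
  rw [Finset.sum_congr rfl fun j _ => this j,
    Finset.sum_ite_eq' Finset.univ i (fun _ => x (i, 1))]
  simp

lemma Omega_mulVec_one {m : ℕ} (x : Idx m → ℝ) (i : Fin m) :
    (Omega m *ᵥ x) (i, 1) = -x (i, 0) := by
  rw [mulVec, dotProduct, sum_Idx]
  have : ∀ j : Fin m, Omega m (i, 1) (j, 0) * x (j, 0) + Omega m (i, 1) (j, 1) * x (j, 1)
      = if j = i then -x (i, 0) else 0 := by
    intro j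
    by_cases h : j = i
    · simp [Omega, h]
    · simp [Omega, h, Ne.symm h]
  rw [Finset.sum_congr rfl fun j _ => this j,
    Finset.sum_ite_eq' Finset.univ i (fun _ => -x (i, 0))]
  simp

/-! ### Norm lemmas -/

lemma euc_norm_sq {𝕜 : Type*} [RCLike 𝕜] {ι : Type*} [Fintype ι] (v : EuclideanSpace 𝕜 ι) :
    ‖v‖ ^ 2 = ∑ i, ‖v i‖ ^ 2 := by
  rw [EuclideanSpace.norm_eq, Real.sq_sqrt (by positivity)]

lemma toEuclideanLin_coord {n : Type*} [Fintype n] [DecidableEq n] {𝕜 : Type*} [RCLike 𝕜]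
    (A : Matrix n n 𝕜) (x : EuclideanSpace 𝕜 n) (p : n) :
    (toEuclideanLin A x) p = (A *ᵥ (fun q => x q)) p := rfl

lemma toEuclideanLin_mul {n : Type*} [Fintype n] [DecidableEq n] {𝕜 : Type*} [RCLike 𝕜]
    (A B : Matrix n n 𝕜) (x : EuclideanSpace 𝕜 n) :
    toEuclideanLin (A * B) x = toEuclideanLin A (toEuclideanLin B x) := by
  simp only [toEuclideanLin_apply]
  ext p
  simp [mulVec_mulVec]

lemma toEuclideanLin_one' {n : Type*} [Fintype n] [DecidableEq n] {𝕜 : Type*} [RCLike 𝕜]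
    (x : EuclideanSpace 𝕜 n) : toEuclideanLin (1 : Matrix n n 𝕜) x = x := by
  simp [toEuclideanLin_apply]

lemma matrix_norm_le_of_forall {n : Type*} [Fintype n] [DecidableEq n] {𝕜 : Type*} [RCLike 𝕜]
    (A : Matrix n n 𝕜) (C : ℝ) (hC : 0 ≤ C)
    (h : ∀ x : EuclideanSpace 𝕜 n, ‖toEuclideanLin A x‖ ≤ C * ‖x‖) : ‖A‖ ≤ C := by
  rw [Matrix.l2_opNorm_def]
  exact ContinuousLinearMap.opNorm_le_bound _ hC h

lemma block_ineq (γ c l : ℝ) (hγ : 0 < γ) (hc : γ + 1 ≤ c) (hl : |l| ≤ 1) (a b : ℂ) :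
    γ ^ 2 * (‖a‖ ^ 2 + ‖b‖ ^ 2) ≤
      ‖Complex.I * (c * b) + l * a‖ ^ 2 + ‖-(Complex.I * (c * a)) + l * b‖ ^ 2 := by
  obtain ⟨hl1, hl2⟩ := abs_le.mp hl
  have h2X1 : 0 ≤ (a.im + b.re) ^ 2 + (a.re - b.im) ^ 2 := by positivity
  have h2X2 : 0 ≤ (a.im - b.re) ^ 2 + (a.re + b.im) ^ 2 := by positivity
  simp only [Complex.sq_norm, Complex.normSq_apply, Complex.add_re,
    Complex.add_im, Complex.mul_re, Complex.mul_im, Complex.I_re, Complex.I_im, Complex.neg_re,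
    Complex.neg_im, Complex.ofReal_re, Complex.ofReal_im]
  rcases le_or_gt 0 l with hl0 | hl0
  · have hp : 0 ≤ l * c := by nlinarith
    have hq : γ ≤ c - l := by nlinarith
    nlinarith [mul_nonneg hp h2X1, mul_nonneg (mul_nonneg (sub_nonneg.mpr hq) hγ.le)
      (by positivity : (0:ℝ) ≤ a.re^2 + a.im^2 + b.re^2 + b.im^2),
      mul_nonneg (sub_nonneg.mpr hq) (sub_nonneg.mpr hq)]
  · have hp : 0 ≤ (-l) * c := by nlinarith
    have hq : γ ≤ c + l := by nlinarith
    nlinarith [mul_nonneg hp h2X2, mul_nonneg (mul_nonneg (sub_nonneg.mpr hq) hγ.le)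
      (by positivity : (0:ℝ) ≤ a.re^2 + a.im^2 + b.re^2 + b.im^2),
      mul_nonneg (sub_nonneg.mpr hq) (sub_nonneg.mpr hq)]

lemma Kmat_lower {m : ℕ} (c : Fin m → ℝ) (l γ : ℝ) (hγ : 0 < γ)
    (hc : ∀ i, γ + 1 ≤ c i) (hl : |l| ≤ 1) (x : EuclideanSpace ℂ (Idx m)) :
    γ * ‖x‖ ≤ ‖toEuclideanLin (Kmat c l) x‖ := by
  have hx2 : ‖x‖ ^ 2 = ∑ j, (‖x (j, 0)‖ ^ 2 + ‖x (j, 1)‖ ^ 2) := by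
    rw [euc_norm_sq, sum_Idx (fun p => ‖x p‖ ^ 2)]
  have hu2 : ‖toEuclideanLin (Kmat c l) x‖ ^ 2
      = ∑ j, (‖(Kmat c l *ᵥ (fun q => x q)) (j, 0)‖ ^ 2
        + ‖(Kmat c l *ᵥ (fun q => x q)) (j, 1)‖ ^ 2) := by
    rw [euc_norm_sq, sum_Idx (fun p => ‖(toEuclideanLin (Kmat c l) x) p‖ ^ 2)]
    rfl
  have key : ∀ j : Fin m, γ ^ 2 * (‖x (j, 0)‖ ^ 2 + ‖x (j, 1)‖ ^ 2)
      ≤ ‖(Kmat c l *ᵥ (fun q => x q)) (j, 0)‖ ^ 2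
        + ‖(Kmat c l *ᵥ (fun q => x q)) (j, 1)‖ ^ 2 := by
    intro j
    rw [Kmat_mulVec_zero, Kmat_mulVec_one]
    exact block_ineq γ (c j) l hγ (hc j) hl (x (j, 0)) (x (j, 1))
  have hsum : (γ * ‖x‖) ^ 2 ≤ ‖toEuclideanLin (Kmat c l) x‖ ^ 2 := by
    calc (γ * ‖x‖) ^ 2 = γ ^ 2 * ‖x‖ ^ 2 := by ring
      _ ≤ ‖toEuclideanLin (Kmat c l) x‖ ^ 2 := by
          rw [hx2, hu2, Finset.mul_sum]
          exact Finset.sum_le_sum fun j _ => key j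
  have h0 : 0 ≤ γ * ‖x‖ := by positivity
  exact (pow_le_pow_iff_left₀ h0 (norm_nonneg _) two_ne_zero).mp hsum

lemma cplx_coord_re {n : Type*} [Fintype n] (B : Matrix n n ℝ) (x : n → ℂ) (p : n) :
    ((cplx B *ᵥ x) p).re = (B *ᵥ (fun q => (x q).re)) p := by
  simp [mulVec, dotProduct, cplx, Complex.re_sum, Complex.re_ofReal_mul]

lemma cplx_coord_im {n : Type*} [Fintype n] (B : Matrix n n ℝ) (x : n → ℂ) (p : n) :
    ((cplx B *ᵥ x) p).im = (B *ᵥ (fun q => (x q).im)) p := by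
  simp [mulVec, dotProduct, cplx, Complex.im_sum, Complex.im_ofReal_mul]

lemma cplx_norm_le {n : Type*} [Fintype n] [DecidableEq n] (B : Matrix n n ℝ) :
    ‖cplx B‖ ≤ ‖B‖ := by
  apply matrix_norm_le_of_forall _ _ (norm_nonneg B)
  intro x
  set a : EuclideanSpace ℝ n := WithLp.toLp 2 (fun q => (x q).re) with ha
  set b : EuclideanSpace ℝ n := WithLp.toLp 2 (fun q => (x q).im) with hb
  have hxa : ‖x‖ ^ 2 = ‖a‖ ^ 2 + ‖b‖ ^ 2 := by
    rw [euc_norm_sq, euc_norm_sq, euc_norm_sq, ← Finset.sum_add_distrib]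
    apply Finset.sum_congr rfl
    intro p _
    rw [show a p = (x p).re from rfl, show b p = (x p).im from rfl]
    simp only [Complex.sq_norm, Complex.normSq_apply, Real.norm_eq_abs, sq_abs]
    ring
  have hua : ‖toEuclideanLin (cplx B) x‖ ^ 2
      = ‖toEuclideanLin B a‖ ^ 2 + ‖toEuclideanLin B b‖ ^ 2 := by
    rw [euc_norm_sq, euc_norm_sq, euc_norm_sq, ← Finset.sum_add_distrib]
    apply Finset.sum_congr rfl
    intro p _
    rw [toEuclideanLin_coord, toEuclideanLin_coord, toEuclideanLin_coord]
    rw [Real.norm_eq_abs, Real.norm_eq_abs, sq_abs, sq_abs, Complex.sq_norm, Complex.normSq_apply, cplx_coord_re, cplx_coord_im]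
    show _ = (B *ᵥ fun q => (x q).re) p ^ 2 + (B *ᵥ fun q => (x q).im) p ^ 2
    ring
  have hBa := Matrix.l2_opNorm_mulVec B a
  have hBb := Matrix.l2_opNorm_mulVec B b
  have h1 : ‖toEuclideanLin (cplx B) x‖ ^ 2 ≤ (‖B‖ * ‖x‖) ^ 2 := by
    rw [hua]
    have e1 : ‖toEuclideanLin B a‖ ≤ ‖B‖ * ‖a‖ := hBa
    have e2 : ‖toEuclideanLin B b‖ ≤ ‖B‖ * ‖b‖ := hBb
    have : (‖B‖ * ‖x‖) ^ 2 = ‖B‖^2 * (‖a‖^2 + ‖b‖^2) := by rw [← hxa]; ring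
    rw [this]
    nlinarith [norm_nonneg (toEuclideanLin B a), norm_nonneg (toEuclideanLin B b),
      norm_nonneg a, norm_nonneg b, norm_nonneg B]
  exact (pow_le_pow_iff_left₀ (norm_nonneg _) (by positivity) two_ne_zero).mp h1

lemma Omega_norm_le (m : ℕ) : ‖Omega m‖ ≤ 1 := by
  apply matrix_norm_le_of_forall _ _ zero_le_one
  intro x
  rw [one_mul]
  have h2 : ‖toEuclideanLin (Omega m) x‖ ^ 2 = ‖x‖ ^ 2 := by
    rw [euc_norm_sq, euc_norm_sq, sum_Idx (fun p => ‖(toEuclideanLin (Omega m) x) p‖ ^ 2),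
      sum_Idx (fun p => ‖x p‖ ^ 2)]
    apply Finset.sum_congr rfl
    intro j _
    rw [toEuclideanLin_coord, toEuclideanLin_coord, Omega_mulVec_zero, Omega_mulVec_one]
    simp [Real.norm_eq_abs, sq_abs]
    ring
  have := congrArg Real.sqrt h2
  rw [Real.sqrt_sq (norm_nonneg _), Real.sqrt_sq (norm_nonneg _)] at this
  exact le_of_eq this

lemma rcoth_eq (x : ℝ) (hx : 0 < x) : rcoth x = 1 + 2 / (Real.exp (2 * x) - 1) := by
  have he : 0 < Real.exp x := Real.exp_pos x
  have hs : 0 < Real.sinh x := Real.sinh_pos_iff.mpr hx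
  have h2 : Real.exp (2 * x) = Real.exp x * Real.exp x := by
    rw [two_mul, Real.exp_add]
  have h21 : Real.exp x * Real.exp x - 1 > 0 := by nlinarith [Real.add_one_lt_exp (ne_of_gt hx), hx]
  rw [rcoth, Real.cosh_eq, Real.sinh_eq, h2, Real.exp_neg]
  have hne : Real.exp x - (Real.exp x)⁻¹ ≠ 0 := by
    rw [Real.sinh_eq, Real.exp_neg] at hs
    intro h; rw [h] at hs; simp at hs
  have hne2 : Real.exp x * Real.exp x - 1 ≠ 0 := ne_of_gt h21
  have hne3 : Real.exp x ^ 2 - 1 ≠ 0 := by rw [sq]; exact hne2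
  field_simp
  ring

lemma lam_abs_le_one (t : ℝ) (ht : 0 ≤ t) : |(t - 1) / (t + 1)| ≤ 1 := by
  rw [abs_div, div_le_one (by positivity)]
  rw [abs_of_pos (by linarith : (0:ℝ) < t + 1)]
  rcases abs_cases (t - 1) with ⟨h, _⟩ | ⟨h, _⟩ <;> linarith

end Aux

/-- For a Gaussian Hamiltonian `H = S⁻ᵀ D S⁻¹` with covariance matrix
`V = (1/2) S coth(D) Sᵀ`, for every `t ≥ 0` the matrix `2iΩV + ((t-1)/(t+1))·I` is
invertible, its smallest singular value is at least `(2/‖S‖∞²)·e^{-2 d_max}/(1-e^{-2 d_max})`,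
and equivalently `‖(2iΩV + ((t-1)/(t+1))·I)⁻¹‖∞ ≤ (‖S‖∞²/2)·(e^{2 d_max} - 1)`. -/
theorem statement1 {m : ℕ} (hm : 0 < m)
    (S : Matrix (Idx m) (Idx m) ℝ) (hS : S * Omega m * Sᵀ = Omega m)
    (d : Fin m → ℝ) (hd : ∀ i, 0 < d i)
    (dmax : ℝ) (hdmax_le : ∀ i, d i ≤ dmax) (hdmax_mem : ∃ i, d i = dmax)
    (H : Matrix (Idx m) (Idx m) ℝ) (hH : H = (S⁻¹)ᵀ * pairDiag d * S⁻¹)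
    (V : Matrix (Idx m) (Idx m) ℝ)
    (hV : V = (1/2 : ℝ) • (S * pairDiag (fun i => rcoth (d i)) * Sᵀ))
    (t : ℝ) (ht : 0 ≤ t) :
    IsUnit ((2 * Complex.I) • (cplx (Omega m) * cplx V) + (((t - 1)/(t + 1) : ℝ) : ℂ) • 1) ∧
    (∀ x : EuclideanSpace ℂ (Idx m),
      (2 / spNorm S ^ 2) * (Real.exp (-2 * dmax) / (1 - Real.exp (-2 * dmax))) * ‖x‖ ≤
        ‖Matrix.toEuclideanLin
          ((2 * Complex.I) • (cplx (Omega m) * cplx V) + (((t - 1)/(t + 1) : ℝ) : ℂ) • 1) x‖) ∧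
    spNorm ((2 * Complex.I) • (cplx (Omega m) * cplx V) + (((t - 1)/(t + 1) : ℝ) : ℂ) • 1)⁻¹
      ≤ (spNorm S ^ 2 / 2) * (Real.exp (2 * dmax) - 1) := by
  have : Nonempty (Fin m) := ⟨⟨0, hm⟩⟩
  -- scalars
  set l : ℝ := (t - 1) / (t + 1) with hldef
  have hl : |l| ≤ 1 := lam_abs_le_one t ht
  obtain ⟨i₀, hi₀⟩ := hdmax_mem
  have hdmax : 0 < dmax := hi₀ ▸ hd i₀
  set E : ℝ := Real.exp (2 * dmax) with hEdef
  have hE : 1 < E := by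
    have := Real.add_one_lt_exp (ne_of_gt (by linarith : (0:ℝ) < 2 * dmax))
    rw [hEdef]; linarith
  set γ : ℝ := 2 / (E - 1) with hγdef
  have hγ : 0 < γ := by
    have h1 : 0 < E - 1 := by linarith
    rw [hγdef]; positivity
  set c : Fin m → ℝ := fun i => rcoth (d i) with hcdef
  have hc : ∀ i, γ + 1 ≤ c i := by
    intro i
    rw [hcdef]
    dsimp only
    rw [rcoth_eq _ (hd i)]
    have hEi : 0 < Real.exp (2 * d i) - 1 := by
      have := Real.add_one_lt_exp (ne_of_gt (by linarith [hd i] : (0:ℝ) < 2 * d i))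
      linarith [hd i]
    have h1 : Real.exp (2 * d i) - 1 ≤ E - 1 := by
      have := Real.exp_le_exp.mpr (by linarith [hdmax_le i] : 2 * d i ≤ 2 * dmax)
      rw [hEdef]; linarith
    have h2 : γ ≤ 2 / (Real.exp (2 * d i) - 1) := by
      rw [hγdef]
      exact div_le_div_of_nonneg_left (by norm_num) hEi h1
    linarith
  have hl2 : l ^ 2 ≤ 1 := by
    have := sq_abs l
    nlinarith [abs_nonneg l]
  have hcl : ∀ i, l ^ 2 - c i ^ 2 ≠ 0 := by
    intro i
    have h1 := hc i
    have : 1 < c i := by linarith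
    nlinarith
  -- matrices
  set P : Matrix (Idx m) (Idx m) ℂ := cplx Sᵀ with hPdef
  set Q : Matrix (Idx m) (Idx m) ℂ := cplx (-(Omega m * S * Omega m)) with hQdef
  have hPQ : P * Q = 1 := by
    rw [hPdef, hQdef, ← cplx_mul, sympT_right_inv S hS, cplx_one]
  have hQP : Q * P = 1 := mul_eq_one_comm.mp hPQ
  set Mmat : Matrix (Idx m) (Idx m) ℂ :=
    (2 * Complex.I) • (cplx (Omega m) * cplx V) + ((l : ℝ) : ℂ) • 1 with hMdef
  -- the conjugation identity
  have hreal : (-(Omega m * S * Omega m)) * (Omega m * pairDiag c) * Sᵀ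
      = Omega m * (S * pairDiag c * Sᵀ) := by
    calc (-(Omega m * S * Omega m)) * (Omega m * pairDiag c) * Sᵀ
        = -(Omega m * S * (Omega m * Omega m) * pairDiag c * Sᵀ) := by noncomm_ring
      _ = -(Omega m * S * (-1) * pairDiag c * Sᵀ) := by rw [Omega_mul_Omega]
      _ = Omega m * (S * pairDiag c * Sᵀ) := by noncomm_ring
  have hM : Mmat = Q * Kmat c l * P := by
    have hQKP : Q * Kmat c l * P
        = Complex.I • (Q * (cplx (Omega m) * cplx (pairDiag c)) * P) + (l : ℂ) • (Q * P) := by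
      rw [Kmat]
      simp only [Matrix.mul_add, Matrix.add_mul, Matrix.mul_smul, Matrix.smul_mul, Matrix.mul_one]
    rw [hQKP, hQP]
    have hmid : Q * (cplx (Omega m) * cplx (pairDiag c)) * P
        = cplx (Omega m) * cplx (S * pairDiag c * Sᵀ) := by
      rw [hQdef, hPdef, ← cplx_mul, ← cplx_mul, ← cplx_mul, ← cplx_mul, hreal]
    rw [hmid, hMdef, hV, cplx_smul]
    rw [show (((1:ℝ)/2 : ℝ) : ℂ) = (1/2 : ℂ) by norm_num]
    rw [mul_smul_comm, smul_smul]
    rw [show (2 * Complex.I * (1 / 2 : ℂ)) = Complex.I from by ring]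
  set N : Matrix (Idx m) (Idx m) ℂ := Kmat' c l * Dinv c l with hNdef
  have hKN : Kmat c l * N = 1 := Kmat_mul_inv c l hcl
  set W : Matrix (Idx m) (Idx m) ℂ := Q * N * P with hWdef
  have hMW : Mmat * W = 1 := by
    rw [hM, hWdef]
    calc Q * Kmat c l * P * (Q * N * P)
        = Q * Kmat c l * (P * Q) * N * P := by noncomm_ring
      _ = Q * (Kmat c l * N) * P := by rw [hPQ]; noncomm_ring
      _ = Q * P := by rw [hKN]; rw [Matrix.mul_one]
      _ = 1 := hQP
  have hWM : W * Mmat = 1 := mul_eq_one_comm.mp hMW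
  -- norms
  have hS0 : S ≠ 0 := by
    intro h
    rw [h] at hS
    simp only [Matrix.zero_mul, Matrix.mul_zero, Matrix.transpose_zero] at hS
    have := congrFun (congrFun hS (⟨0, hm⟩, 0)) (⟨0, hm⟩, 1)
    simp [Omega] at this
  have hs_pos : 0 < spNorm S := by
    rw [spNorm_eq]
    exact norm_pos_iff.mpr hS0
  set s : ℝ := spNorm S with hsdef
  have hsnorm : ‖S‖ = s := (spNorm_eq S).symm
  have hP_le : ‖P‖ ≤ s := by
    have h1 : Sᵀ = Sᴴ := by
      ext i j; simp [conjTranspose_apply]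
    calc ‖P‖ ≤ ‖Sᵀ‖ := cplx_norm_le _
      _ = ‖Sᴴ‖ := by rw [h1]
      _ = ‖S‖ := Matrix.l2_opNorm_conjTranspose S
      _ = s := hsnorm
  have hQ_le : ‖Q‖ ≤ s := by
    have h2 : ‖-(Omega m * S * Omega m)‖ ≤ s := by
      rw [norm_neg]
      calc ‖Omega m * S * Omega m‖ ≤ ‖Omega m * S‖ * ‖Omega m‖ := Matrix.l2_opNorm_mul _ _
        _ ≤ ‖Omega m * S‖ * 1 := by
            exact mul_le_mul_of_nonneg_left (Omega_norm_le m) (norm_nonneg _)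
        _ = ‖Omega m * S‖ := mul_one _
        _ ≤ ‖Omega m‖ * ‖S‖ := Matrix.l2_opNorm_mul _ _
        _ ≤ 1 * ‖S‖ := mul_le_mul_of_nonneg_right (Omega_norm_le m) (norm_nonneg _)
        _ = s := by rw [one_mul, hsnorm]
    calc ‖Q‖ ≤ ‖-(Omega m * S * Omega m)‖ := cplx_norm_le _
      _ ≤ s := h2
  have hN_le : ‖N‖ ≤ 1 / γ := by
    apply matrix_norm_le_of_forall _ _ (by positivity)
    intro x
    have h1 := Kmat_lower c l γ hγ hc hl (toEuclideanLin N x)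
    have h2 : toEuclideanLin (Kmat c l) (toEuclideanLin N x) = x := by
      rw [← toEuclideanLin_mul, hKN, toEuclideanLin_one']
    rw [h2] at h1
    rw [div_mul_eq_mul_div, le_div_iff₀ hγ]
    linarith
  have hW_le : ‖W‖ ≤ s * (1 / γ) * s := by
    calc ‖W‖ ≤ ‖Q * N‖ * ‖P‖ := Matrix.l2_opNorm_mul _ _
      _ ≤ (‖Q‖ * ‖N‖) * ‖P‖ :=
          mul_le_mul_of_nonneg_right (Matrix.l2_opNorm_mul _ _) (norm_nonneg _)
      _ ≤ (s * (1 / γ)) * s := by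
          apply mul_le_mul _ hP_le (norm_nonneg _) (by positivity)
          exact mul_le_mul hQ_le hN_le (norm_nonneg _) hs_pos.le
  have hbound : s * (1 / γ) * s = (s ^ 2 / 2) * (E - 1) := by
    rw [hγdef]
    field_simp
  refine ⟨⟨⟨Mmat, W, hMW, hWM⟩, rfl⟩, ?_, ?_⟩
  · -- lower bound
    intro x
    have hinv : Real.exp (-2 * dmax) = E⁻¹ := by
      rw [hEdef, ← Real.exp_neg]
      norm_num
    have hconst : (2 / s ^ 2) * (Real.exp (-2 * dmax) / (1 - Real.exp (-2 * dmax)))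
        = 1 / ((s ^ 2 / 2) * (E - 1)) := by
      rw [hinv]
      have hE0 : E ≠ 0 := by positivity
      have hE1 : E - 1 ≠ 0 := by linarith
      have hs0 : s ≠ 0 := ne_of_gt hs_pos
      field_simp
      try ring
    rw [hconst]
    have hBpos : 0 < (s ^ 2 / 2) * (E - 1) := by
      apply mul_pos (by positivity)
      linarith
    rw [div_mul_eq_mul_div, one_mul, div_le_iff₀ hBpos]
    have h1 : toEuclideanLin W (toEuclideanLin Mmat x) = x := by
      rw [← toEuclideanLin_mul, hWM, toEuclideanLin_one']
    have h2 : ‖x‖ ≤ ((s ^ 2 / 2) * (E - 1)) * ‖toEuclideanLin Mmat x‖ := by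
      calc ‖x‖ = ‖toEuclideanLin W (toEuclideanLin Mmat x)‖ := by rw [h1]
        _ ≤ ‖W‖ * ‖toEuclideanLin Mmat x‖ := by
            rw [Matrix.l2_opNorm_def]
            exact ContinuousLinearMap.le_opNorm (LinearMap.toContinuousLinearMap (toEuclideanLin W)) _
        _ ≤ ((s ^ 2 / 2) * (E - 1)) * ‖toEuclideanLin Mmat x‖ := by
            apply mul_le_mul_of_nonneg_right _ (norm_nonneg _)
            rw [← hbound]; exact hW_le
    linarith
  · -- upper bound on the inverse
    have hMinv : Mmat⁻¹ = W := Matrix.inv_eq_right_inv hMW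
    rw [hMinv, spNorm_eq]
    rw [← hbound]
    exact hW_le
end

section
/- Let S be a 2m×2m real symplectic matrix and D = diag(d₁,d₁,…,d_m,d_m) with all d_i > 0, and let d_min := min_i d_i and H := S⁻ᵀDS⁻¹ (a symmetric positive definite matrix). Then ‖S‖∞ ≥ 1 and ‖H‖∞ ≥ d_min·‖S‖∞²; consequently, writing λ_max for the largest eigenvalue of H, one has 1 ≤ ‖S‖∞² ≤ λ_max/d_min. -/
open Matrix

set_option maxHeartbeats 1000000

open scoped Matrix.Norms.L2Operator

lemma spNorm_eq_norm {p : Type*} [Fintype p] [DecidableEq p] (A : Matrix p p ℝ) :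
    spNorm A = ‖A‖ := rfl

lemma omega_mul_transpose (m : ℕ) : Omega m * (Omega m)ᵀ = 1 := by
  ext ⟨i,a⟩ ⟨j,b⟩
  simp only [Matrix.mul_apply, Omega, transpose_apply, of_apply, Fintype.sum_prod_type,
    Matrix.one_apply, Prod.mk.injEq]
  by_cases hij : i = j
  · subst hij
    fin_cases a <;> fin_cases b <;> simp [Finset.sum_ite_eq', Fin.sum_univ_two]
  · fin_cases a <;> fin_cases b <;> simp [hij, Finset.sum_ite_eq', Fin.sum_univ_two, Ne.symm hij]

lemma normT {p : Type*} [Fintype p] [DecidableEq p] (A : Matrix p p ℝ) :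
    ‖Aᵀ‖ = ‖A‖ := by
  rw [← Matrix.conjTranspose_eq_transpose_of_trivial, Matrix.l2_opNorm_conjTranspose]

/-- For a symplectic `S` and `H = S⁻ᵀ D S⁻¹` with
`D = diag(d₁,d₁,…,d_m,d_m)`, `d_i > 0`: `‖S‖∞ ≥ 1` and `‖H‖∞ ≥ d_min·‖S‖∞²`;
consequently `1 ≤ ‖S‖∞² ≤ λ_max/d_min`, where `λ_max` is the largest eigenvalue of `H`
(which, `H` being symmetric positive definite, equals its spectral norm `‖H‖∞`). -/
theorem statement19 {m : ℕ} (hm : 0 < m)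
    (S : Matrix (Idx m) (Idx m) ℝ) (hS : S * Omega m * Sᵀ = Omega m)
    (d : Fin m → ℝ) (hd : ∀ i, 0 < d i)
    (dmin : ℝ) (hdmin_le : ∀ i, dmin ≤ d i) (hdmin_mem : ∃ i, d i = dmin)
    (H : Matrix (Idx m) (Idx m) ℝ) (hH : H = (S⁻¹)ᵀ * pairDiag d * S⁻¹) :
    1 ≤ spNorm S ∧
    dmin * spNorm S ^ 2 ≤ spNorm H ∧
    1 ≤ spNorm S ^ 2 ∧
    spNorm S ^ 2 ≤ spNorm H / dmin := by
  haveI : Nonempty (Idx m) := ⟨(⟨0, hm⟩, 0)⟩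
  haveI : Nontrivial (Matrix (Idx m) (Idx m) ℝ) := Matrix.nonempty
  obtain ⟨i0, hi0⟩ := hdmin_mem
  have hdmin_pos : 0 < dmin := hi0 ▸ hd i0
  set Ω := Omega m with hΩdef
  have hΩ : Ω * Ωᵀ = 1 := omega_mul_transpose m
  have hΩ' : Ωᵀ * Ω = 1 := mul_eq_one_comm.mp hΩ
  -- S is invertible with explicit inverse
  have hSright : S * (Ω * Sᵀ * Ωᵀ) = 1 := by
    calc S * (Ω * Sᵀ * Ωᵀ) = (S * Ω * Sᵀ) * Ωᵀ := by noncomm_ring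
    _ = Ω * Ωᵀ := by rw [hS]
    _ = 1 := hΩ
  have hSinv : S⁻¹ = Ω * Sᵀ * Ωᵀ := Matrix.inv_eq_right_inv hSright
  have hBS : (Ω * Sᵀ * Ωᵀ) * S = 1 := mul_eq_one_comm.mp hSright
  have hST : Sᵀ = Ωᵀ * S⁻¹ * Ω := by
    rw [hSinv]
    calc Sᵀ = (Ωᵀ * Ω) * Sᵀ * (Ωᵀ * Ω) := by rw [hΩ']; noncomm_ring
    _ = Ωᵀ * (Ω * Sᵀ * Ωᵀ) * Ω := by noncomm_ring
  -- norms of Ω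
  have hΩsq : ‖Ω‖ * ‖Ω‖ = 1 := by
    rw [← Matrix.l2_opNorm_conjTranspose_mul_self,
      Matrix.conjTranspose_eq_transpose_of_trivial, hΩ', norm_one]
  have hnΩ : ‖Ω‖ = 1 := by
    rcases mul_self_eq_one_iff.mp hΩsq with h | h
    · exact h
    · have := norm_nonneg Ω; linarith
  have hnΩT : ‖Ωᵀ‖ = 1 := by rw [normT]; exact hnΩ
  have hTS : ‖Sᵀ‖ = ‖S‖ := normT S
  -- ‖S⁻¹‖ = ‖S‖ (both inequalities)
  have hinv_le : ‖S⁻¹‖ ≤ ‖S‖ := by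
    rw [hSinv]
    calc ‖Ω * Sᵀ * Ωᵀ‖ ≤ ‖Ω * Sᵀ‖ * ‖Ωᵀ‖ := norm_mul_le _ _
    _ ≤ ‖Ω‖ * ‖Sᵀ‖ * ‖Ωᵀ‖ := by
        have := norm_mul_le Ω Sᵀ
        have := norm_nonneg Ωᵀ
        nlinarith
    _ = ‖S‖ := by rw [hnΩ, hnΩT, hTS]; ring
  have hle_inv : ‖S‖ ≤ ‖S⁻¹‖ := by
    rw [← hTS, hST]
    calc ‖Ωᵀ * S⁻¹ * Ω‖ ≤ ‖Ωᵀ * S⁻¹‖ * ‖Ω‖ := norm_mul_le _ _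
    _ ≤ ‖Ωᵀ‖ * ‖S⁻¹‖ * ‖Ω‖ := by
        have := norm_mul_le Ωᵀ S⁻¹
        have := norm_nonneg Ω
        nlinarith
    _ = ‖S⁻¹‖ := by rw [hnΩ, hnΩT]; ring
  -- 1 ≤ ‖S‖
  have hSone : 1 ≤ ‖S‖ := by
    have h1 : (1 : ℝ) = ‖(1 : Matrix (Idx m) (Idx m) ℝ)‖ := norm_one.symm
    have h2 : ‖(1 : Matrix (Idx m) (Idx m) ℝ)‖ ≤ ‖S⁻¹‖ * ‖S‖ := by
      rw [hSinv]; rw [← hBS]; exact norm_mul_le _ _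
    have := norm_nonneg S
    nlinarith
  -- the key quadratic form bound
  have key : ∀ x : EuclideanSpace ℝ (Idx m),
      dmin * ((S⁻¹ *ᵥ x) ⬝ᵥ (S⁻¹ *ᵥ x)) ≤ ‖H‖ * ‖x‖ ^ 2 := by
    intro x
    set v : Idx m → ℝ := S⁻¹ *ᵥ x with hv
    have h2 : x ⬝ᵥ (H *ᵥ x) = v ⬝ᵥ (pairDiag d *ᵥ v) := by
      rw [hH, ← Matrix.mulVec_mulVec, ← Matrix.mulVec_mulVec, Matrix.dotProduct_mulVec,
        Matrix.vecMul_transpose]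
    have h3 : dmin * (v ⬝ᵥ v) ≤ v ⬝ᵥ (pairDiag d *ᵥ v) := by
      simp only [dotProduct, pairDiag, Matrix.mulVec_diagonal, Finset.mul_sum]
      apply Finset.sum_le_sum
      intro p _
      have := hdmin_le p.1
      nlinarith [sq_nonneg (v p)]
    have h4 : x ⬝ᵥ (H *ᵥ x) ≤ ‖H‖ * ‖x‖ ^ 2 := by
      have hinner : x ⬝ᵥ (H *ᵥ x)
          = (inner ℝ x ((EuclideanSpace.equiv (Idx m) ℝ).symm (H *ᵥ x)) : ℝ) := by
        rw [PiLp.inner_apply]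
        simp [dotProduct, RCLike.inner_apply, mul_comm]
      calc x ⬝ᵥ (H *ᵥ x) = (inner ℝ x ((EuclideanSpace.equiv (Idx m) ℝ).symm (H *ᵥ x)) : ℝ) := hinner
      _ ≤ ‖x‖ * ‖(EuclideanSpace.equiv (Idx m) ℝ).symm (H *ᵥ x)‖ := real_inner_le_norm _ _
      _ ≤ ‖x‖ * (‖H‖ * ‖x‖) := by
          have := Matrix.l2_opNorm_mulVec H x
          have := norm_nonneg x
          nlinarith
      _ = ‖H‖ * ‖x‖ ^ 2 := by ring
    linarith
  -- translate to operator norm of S⁻¹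
  have hHnn : 0 ≤ ‖H‖ := norm_nonneg H
  have hc : (0:ℝ) ≤ ‖H‖ / dmin := div_nonneg hHnn hdmin_pos.le
  have hinv_bound : ‖S⁻¹‖ ≤ Real.sqrt (‖H‖ / dmin) := by
    rw [Matrix.l2_opNorm_def]
    apply ContinuousLinearMap.opNorm_le_bound _ (Real.sqrt_nonneg _)
    intro x
    have hx := key x
    have hLx : ‖LinearMap.toContinuousLinearMap (Matrix.toEuclideanLin (S⁻¹)) x‖ ^ 2
        = (S⁻¹ *ᵥ x) ⬝ᵥ (S⁻¹ *ᵥ x) := by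
      rw [EuclideanSpace.norm_eq, Real.sq_sqrt (by positivity)]
      simp [dotProduct, Matrix.toEuclideanLin_apply, sq, Real.norm_eq_abs, abs_mul_abs_self]
    set L := LinearMap.toContinuousLinearMap (Matrix.toEuclideanLin (S⁻¹))
    have h1 : ‖L x‖ ^ 2 ≤ (‖H‖ / dmin) * ‖x‖ ^ 2 := by
      rw [hLx]
      rw [div_mul_eq_mul_div, le_div_iff₀ hdmin_pos]
      nlinarith [key x]
    have : ‖L x‖ ≤ Real.sqrt ((‖H‖ / dmin) * ‖x‖ ^ 2) := by
      rw [← Real.sqrt_sq (norm_nonneg (L x))]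
      exact Real.sqrt_le_sqrt h1
    calc ‖L x‖ ≤ Real.sqrt ((‖H‖ / dmin) * ‖x‖ ^ 2) := this
    _ = Real.sqrt (‖H‖ / dmin) * ‖x‖ := by
        rw [Real.sqrt_mul hc, Real.sqrt_sq (norm_nonneg x)]
  have hinv_sq : ‖S⁻¹‖ ^ 2 ≤ ‖H‖ / dmin := by
    have := pow_le_pow_left₀ (norm_nonneg _) hinv_bound 2
    rwa [Real.sq_sqrt hc] at this
  have hS_sq : ‖S‖ ^ 2 ≤ ‖H‖ / dmin :=
    le_trans (pow_le_pow_left₀ (norm_nonneg _) hle_inv 2) hinv_sq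
  refine ⟨?_, ?_, ?_, ?_⟩
  · rw [spNorm_eq_norm]; exact hSone
  · rw [spNorm_eq_norm, spNorm_eq_norm]
    rw [le_div_iff₀ hdmin_pos] at hS_sq
    nlinarith
  · rw [spNorm_eq_norm]; nlinarith
  · rw [spNorm_eq_norm, spNorm_eq_norm]; exact hS_sq
end
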